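/- Let δ > 0, α > 0, r > 0 and ū ∈ ℝ, and set ρ := δ^α r and v := (1/(1+δ^α r))·(ū − 1/r). Define u : ℝ³ \ {0} → ℝ by u(x) = ū + (δ^α r/(1+δ^α r))·(1 − ū r)·δ^α/‖x‖. Then: (i) u is harmonic on ℝ³ \ {0}; (ii) u(x) = 1/r + v for every x with ‖x‖ = ρ; (iii) the outward normal derivative ⟪∇u(x), x/‖x‖⟫ equals v for every x with ‖x‖ = ρ; (iv) u(x) → ū as ‖x‖ → ∞. (This is the explicit solution of the single-particle exterior problem in the reaction-controlled scaling.) -/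

import Mathlib

open MeasureTheory Filter

local notation "E" => EuclideanSpace ℝ (Fin 3)

/-- The Laplacian of `u : ℝ³ → ℝ` at `x`: the sum of the second directional
derivatives along the standard orthonormal basis directions. -/
noncomputable def laplacian (u : E → ℝ) (x : E) : ℝ :=
  ∑ i : Fin 3,
    fderiv ℝ (fun y => fderiv ℝ u y (EuclideanSpace.single i 1)) x (EuclideanSpace.single i 1)

/-- `u` is harmonic on `s`: it is twice continuously differentiable there and its
Laplacian vanishes on `s`. -/
def IsHarmonicOn (u : E → ℝ) (s : Set E) : Prop :=
  ContDiffOn ℝ 2 u s ∧ ∀ x ∈ s, laplacian u x = 0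

lemma myHasFDerivAt_norm (x : E) (hx : x ≠ 0) :
    HasFDerivAt (fun y : E => ‖y‖) (‖x‖⁻¹ • (innerSL ℝ x : E →L[ℝ] ℝ)) x := by
  have hn : ‖x‖ ≠ 0 := norm_ne_zero_iff.2 hx
  have hsq : HasFDerivAt (fun y : E => ‖y‖ ^ 2) ((2 : ℕ) • (innerSL ℝ x : E →L[ℝ] ℝ)) x :=
    (hasStrictFDerivAt_norm_sq x).hasFDerivAt
  have hs : HasDerivAt Real.sqrt (1 / (2 * Real.sqrt (‖x‖ ^ 2))) (‖x‖ ^ 2) :=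
    Real.hasDerivAt_sqrt (by positivity)
  have h := hs.comp_hasFDerivAt x hsq
  have heq : (Real.sqrt ∘ fun y : E => ‖y‖ ^ 2) = fun y : E => ‖y‖ := by
    funext y; exact Real.sqrt_sq (norm_nonneg y)
  rw [heq] at h
  refine h.congr_fderiv (Eq.symm ?_)
  rw [Real.sqrt_sq (norm_nonneg x)]
  ext y
  simp only [ContinuousLinearMap.smul_apply, ContinuousLinearMap.coe_smul', Pi.smul_apply,
    smul_eq_mul, nsmul_eq_mul, Nat.cast_ofNat]
  field_simp

lemma myHasFDerivAt_inv_norm (x : E) (hx : x ≠ 0) :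
    HasFDerivAt (fun y : E => ‖y‖⁻¹) ((-(‖x‖ ^ 3)⁻¹) • (innerSL ℝ x : E →L[ℝ] ℝ)) x := by
  have hn : ‖x‖ ≠ 0 := norm_ne_zero_iff.2 hx
  have h := (hasDerivAt_inv hn).comp_hasFDerivAt x (myHasFDerivAt_norm x hx)
  refine h.congr_fderiv (Eq.symm ?_)
  rw [smul_smul]
  congr 1
  field_simp

lemma myHasFDerivAt_inv_norm_cube (x : E) (hx : x ≠ 0) :
    HasFDerivAt (fun y : E => (‖y‖ ^ 3)⁻¹) ((-3 * (‖x‖ ^ 5)⁻¹) • (innerSL ℝ x : E →L[ℝ] ℝ)) x := by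
  have hn : ‖x‖ ≠ 0 := norm_ne_zero_iff.2 hx
  have hp := (hasDerivAt_pow 3 ‖x‖).comp_hasFDerivAt x (myHasFDerivAt_norm x hx)
  have h := (hasDerivAt_inv (pow_ne_zero 3 hn)).comp_hasFDerivAt x hp
  refine h.congr_fderiv (Eq.symm ?_)
  rw [smul_smul, smul_smul]
  congr 1
  field_simp
  ring

lemma hasFDerivAt_uFun (c d : ℝ) (x : E) (hx : x ≠ 0) :
    HasFDerivAt (fun y : E => d + c * ‖y‖⁻¹)
      ((-(c * (‖x‖ ^ 3)⁻¹)) • (innerSL ℝ x : E →L[ℝ] ℝ)) x := by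
  have h := ((myHasFDerivAt_inv_norm x hx).const_mul c).const_add d
  refine h.congr_fderiv (Eq.symm ?_)
  rw [smul_smul]
  congr 1
  ring

lemma hasGradientAt_uFun (c d : ℝ) (x : E) (hx : x ≠ 0) :
    HasGradientAt (fun y : E => d + c * ‖y‖⁻¹) ((-(c * (‖x‖ ^ 3)⁻¹)) • x) x := by
  rw [hasGradientAt_iff_hasFDerivAt]
  refine (hasFDerivAt_uFun c d x hx).congr_fderiv (Eq.symm ?_)
  ext y
  simp [InnerProductSpace.toDual_apply_apply, real_inner_smul_left]

lemma fderiv_uFun_apply (c d : ℝ) (y : E) (hy : y ≠ 0) (i : Fin 3) :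
    fderiv ℝ (fun z : E => d + c * ‖z‖⁻¹) y (EuclideanSpace.single i 1)
      = -c * ((‖y‖ ^ 3)⁻¹ * y i) := by
  rw [(hasFDerivAt_uFun c d y hy).fderiv]
  simp [real_inner_comm, EuclideanSpace.inner_single_right]
  ring

lemma hasFDerivAt_Gi (c : ℝ) (x : E) (hx : x ≠ 0) (i : Fin 3) :
    HasFDerivAt (fun y : E => -c * ((‖y‖ ^ 3)⁻¹ * y i))
      ((-c) • ((‖x‖ ^ 3)⁻¹ • (EuclideanSpace.proj i : E →L[ℝ] ℝ)
        + (x i) • ((-3 * (‖x‖ ^ 5)⁻¹) • (innerSL ℝ x : E →L[ℝ] ℝ)))) x := by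
  have hproj : HasFDerivAt (fun y : E => y i) (EuclideanSpace.proj i : E →L[ℝ] ℝ) x :=
    (EuclideanSpace.proj i : E →L[ℝ] ℝ).hasFDerivAt
  exact ((myHasFDerivAt_inv_norm_cube x hx).mul hproj).const_mul (-c)

lemma fderiv_Gi_apply (c : ℝ) (x : E) (hx : x ≠ 0) (i : Fin 3) :
    fderiv ℝ (fun y : E => -c * ((‖y‖ ^ 3)⁻¹ * y i)) x (EuclideanSpace.single i 1)
      = -c * ((‖x‖ ^ 3)⁻¹ - 3 * (‖x‖ ^ 5)⁻¹ * (x i) ^ 2) := by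
  rw [(hasFDerivAt_Gi c x hx i).fderiv]
  simp [real_inner_comm, EuclideanSpace.proj, EuclideanSpace.inner_single_right]
  ring

lemma sum_sq_coords (x : E) : ∑ i : Fin 3, (x i) ^ 2 = ‖x‖ ^ 2 := by
  rw [EuclideanSpace.norm_eq, Real.sq_sqrt (by positivity)]
  refine Finset.sum_congr rfl fun i _ => ?_
  rw [Real.norm_eq_abs, sq_abs]

lemma laplacian_uFun (c d : ℝ) (x : E) (hx : x ≠ 0) :
    laplacian (fun y : E => d + c * ‖y‖⁻¹) x = 0 := by
  have hn : ‖x‖ ≠ 0 := norm_ne_zero_iff.2 hx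
  unfold laplacian
  have hterm : ∀ i : Fin 3,
      fderiv ℝ (fun y => fderiv ℝ (fun z : E => d + c * ‖z‖⁻¹) y (EuclideanSpace.single i 1)) x
        (EuclideanSpace.single i 1)
      = -c * ((‖x‖ ^ 3)⁻¹ - 3 * (‖x‖ ^ 5)⁻¹ * (x i) ^ 2) := by
    intro i
    have hev : (fun y => fderiv ℝ (fun z : E => d + c * ‖z‖⁻¹) y (EuclideanSpace.single i 1))
        =ᶠ[nhds x] fun y : E => -c * ((‖y‖ ^ 3)⁻¹ * y i) := by
      filter_upwards [IsOpen.mem_nhds isOpen_compl_singleton hx] with y hy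
      exact fderiv_uFun_apply c d y hy i
    rw [hev.fderiv_eq]
    exact fderiv_Gi_apply c x hx i
  rw [Finset.sum_congr rfl fun i _ => hterm i]
  have hsum := sum_sq_coords x
  have h3 : ∀ i : Fin 3, -c * ((‖x‖ ^ 3)⁻¹ - 3 * (‖x‖ ^ 5)⁻¹ * (x i) ^ 2)
      = -c * (‖x‖ ^ 3)⁻¹ + (c * (3 * (‖x‖ ^ 5)⁻¹)) * (x i) ^ 2 := fun i => by ring
  rw [Finset.sum_congr rfl fun i _ => h3 i, Finset.sum_add_distrib, Finset.sum_const,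
    ← Finset.mul_sum, hsum]
  simp only [Finset.card_univ, Fintype.card_fin, nsmul_eq_mul, Nat.cast_ofNat]
  field_simp
  ring

/-- The explicit solution of the single-particle exterior problem in the
reaction-controlled scaling. -/
theorem single_particle_explicit_solution
    (δ α r ubar : ℝ) (hδ : 0 < δ) (hα : 0 < α) (hr : 0 < r)
    (ρ v : ℝ) (hρ : ρ = δ ^ α * r)
    (hv : v = (1 / (1 + δ ^ α * r)) * (ubar - 1 / r))
    (u : E → ℝ)
    (hu : ∀ x : E, u x = ubar + (δ ^ α * r / (1 + δ ^ α * r)) * (1 - ubar * r) * δ ^ α / ‖x‖) :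
    -- (i) u is harmonic on ℝ³ \ {0}
    IsHarmonicOn u ({(0 : E)}ᶜ) ∧
    -- (ii) Gibbs–Thomson boundary condition on the sphere of radius ρ
    (∀ x : E, ‖x‖ = ρ → u x = 1 / r + v) ∧
    -- (iii) the outward normal derivative on the sphere of radius ρ equals v
    (∀ x : E, ‖x‖ = ρ → (inner ℝ (gradient u x) (‖x‖⁻¹ • x) : ℝ) = v) ∧
    -- (iv) u(x) → ū as ‖x‖ → ∞
    Tendsto u (Filter.comap norm Filter.atTop) (nhds ubar) := by
  have hs : (0 : ℝ) < δ ^ α := Real.rpow_pos_of_pos hδ α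
  set s : ℝ := δ ^ α with hsdef
  have h1s : (0 : ℝ) < 1 + s * r := by positivity
  have hρ0 : 0 < ρ := by rw [hρ]; positivity
  set A : ℝ := (s * r / (1 + s * r)) * (1 - ubar * r) * s with hA
  clear_value A
  clear_value s
  have hu' : u = fun y : E => ubar + A * ‖y‖⁻¹ := by
    funext y
    rw [hu y, hA]
    ring
  refine ⟨⟨?_, ?_⟩, ?_, ?_, ?_⟩
  · -- ContDiffOn
    rw [hu']
    intro y hy
    have hy0 : y ≠ 0 := hy
    exact (contDiffAt_const.add (contDiffAt_const.mul
      ((contDiffAt_norm ℝ hy0).inv (norm_ne_zero_iff.2 hy0)))).contDiffWithinAt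
  · -- Laplacian
    intro x hx
    rw [hu']
    exact laplacian_uFun A ubar x hx
  · -- (ii)
    intro x hnx
    have hx0 : ‖x‖ ≠ 0 := by rw [hnx]; exact ne_of_gt hρ0
    have h1s' : (1 : ℝ) + s * r ≠ 0 := ne_of_gt h1s
    rw [hu x, hnx, hρ, hv, hA]
    rw [← sub_eq_zero]
    field_simp
    ring
  · -- (iii)
    intro x hnx
    have hx0 : x ≠ 0 := by
      intro h; rw [h, norm_zero] at hnx; exact (ne_of_gt hρ0) hnx.symm
    rw [hu']
    have hgrad := (hasGradientAt_uFun A ubar x hx0).gradient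
    have h1s' : (1 : ℝ) + s * r ≠ 0 := ne_of_gt h1s
    rw [hgrad, real_inner_smul_left, real_inner_smul_right, real_inner_self_eq_norm_sq, hnx,
      hρ, hv, hA]
    field_simp
    ring
  · -- (iv)
    rw [hu']
    have h1 : Tendsto (fun y : E => ‖y‖) (Filter.comap norm Filter.atTop) Filter.atTop :=
      tendsto_comap
    have h2 : Tendsto (fun y : E => ‖y‖⁻¹) (Filter.comap norm Filter.atTop) (nhds 0) :=
      tendsto_inv_atTop_zero.comp h1
    have h3 : Tendsto (fun y : E => ubar + A * ‖y‖⁻¹) (Filter.comap norm Filter.atTop)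
        (nhds (ubar + A * 0)) :=
      tendsto_const_nhds.add (tendsto_const_nhds.mul h2)
    simpa using h3
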